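/- Every DAP alpha admits exactly one of the following decompositions: alpha = UD; alpha = beta UD with beta a DAP; alpha is prime; or alpha = beta gamma with beta a DAP and gamma a prime DAP. -/

import Mathlib

open PowerSeries

/-- A valid step sequence: each step is an up-step `1` or a down-step `-k` (`k ≥ 1`),
and no two down-steps are consecutive. -/
def GoodSteps (p : List ℤ) : Prop :=
  (∀ s ∈ p, s = 1 ∨ s ≤ -1) ∧ List.Chain' (fun a b => a = 1 ∨ b = 1) p

/-- A Dyck path with air pockets: nonempty, valid steps, ends on the x-axis,
stays weakly above the x-axis. -/
def IsDAP (p : List ℤ) : Prop :=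
  p ≠ [] ∧ GoodSteps p ∧ p.sum = 0 ∧ ∀ i, 0 ≤ (p.take i).sum

/-- A grand Dyck path with air pockets: valid steps, ends on the x-axis
(possibly going below it); the empty path is allowed. -/
def IsGDAP (p : List ℤ) : Prop := GoodSteps p ∧ p.sum = 0

/-- Number of DAP of length `n`. -/
noncomputable def dapCount (n : ℕ) : ℕ :=
  Nat.card {p : List ℤ // IsDAP p ∧ p.length = n}

/-- A prime DAP: a DAP ending with a down-step `D_k`, `k ≥ 2`, that returns to the
x-axis only at its final point. -/
def IsPrimeDAP (p : List ℤ) : Prop :=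
  IsDAP p ∧ (∃ d, p.getLast? = some d ∧ d ≤ -2) ∧
    ∀ i, 0 < i → i < p.length → 0 < (p.take i).sum

/-- Decomposition (i): `α = UD`. -/
def DecA (p : List ℤ) : Prop := p = [1, -1]
/-- Decomposition (ii): `α = β UD` with `β` a DAP. -/
def DecB (p : List ℤ) : Prop := ∃ β, IsDAP β ∧ p = β ++ [1, -1]
/-- Decomposition (iii): `α` is prime. -/
def DecC (p : List ℤ) : Prop := IsPrimeDAP p
/-- Decomposition (iv): `α = β γ` with `β` a DAP and `γ` prime. -/
def DecD (p : List ℤ) : Prop := ∃ β γ, IsDAP β ∧ IsPrimeDAP γ ∧ p = β ++ γ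


lemma goodSteps_take {p : List ℤ} (h : GoodSteps p) (n : ℕ) : GoodSteps (p.take n) :=
  ⟨fun s hs => h.1 s (List.mem_of_mem_take hs), h.2.take n⟩

lemma goodSteps_drop {p : List ℤ} (h : GoodSteps p) (n : ℕ) : GoodSteps (p.drop n) :=
  ⟨fun s hs => h.1 s (List.mem_of_mem_drop hs), h.2.drop n⟩

lemma sum_take_getLast {p : List ℤ} (h : p ≠ []) :
    p.sum = (p.take (p.length - 1)).sum + p.getLast h := by
  conv_lhs => rw [← List.dropLast_append_getLast h]
  rw [List.sum_append, List.dropLast_eq_take]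
  simp

lemma dap_two_le_length {p : List ℤ} (h : IsDAP p) : 2 ≤ p.length := by
  obtain ⟨hne, hg, hs, _⟩ := h
  rcases p with _ | ⟨a, _ | ⟨b, t⟩⟩
  · exact absurd rfl hne
  · simp at hs
    rcases hg.1 a (by simp) with h1 | h1 <;> omega
  · simp

lemma prime_or_UD {q : List ℤ} (hne : q ≠ []) (hg : GoodSteps q) (hs : q.sum = 0)
    (hpos : ∀ i, 0 < i → i < q.length → 0 < (q.take i).sum) :
    q = [1, -1] ∨ IsPrimeDAP q := by
  have hdap : IsDAP q := by
    refine ⟨hne, hg, hs, fun i => ?_⟩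
    rcases Nat.eq_zero_or_pos i with h0 | h0
    · simp [h0]
    rcases lt_or_ge i q.length with hlt | hle
    · exact le_of_lt (hpos i h0 hlt)
    · rw [List.take_of_length_le hle, hs]
  have hlen : 2 ≤ q.length := dap_two_le_length hdap
  set d := q.getLast hne with hd
  have hsum1 : (q.take (q.length - 1)).sum + d = 0 := by
    rw [← sum_take_getLast hne, hs]
  have hpos1 : 0 < (q.take (q.length - 1)).sum := hpos _ (by omega) (by omega)
  have hdneg : d ≤ -1 := by
    rcases hg.1 d (List.getLast_mem hne) with h1 | h1 <;> omega
  rcases lt_or_ge (-2 : ℤ) d with hcase | hcase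
  · -- d = -1, show q = [1,-1]
    have hd1 : d = -1 := by omega
    left
    have hq : q = q.take (q.length - 1) ++ [d] := by
      conv_lhs => rw [← List.dropLast_append_getLast hne]
      rw [List.dropLast_eq_take]
    set t := q.take (q.length - 1) with ht
    have htlen : t.length = q.length - 1 := by
      simp [ht]
    have htne : t ≠ [] := by
      intro h; rw [h] at htlen; simp at htlen; omega
    set c := t.getLast htne with hc
    have hc1 : c = 1 := by
      have := hg.2
      rw [hq, List.Chain', List.isChain_append] at this
      have hr := this.2.2 c (by simp [List.getLast?_eq_getLast htne, hc]) d (by simp)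
      rcases hr with h1 | h1
      · exact h1
      · omega
    have hts : t.sum = 1 := by omega
    have htd : t.dropLast.sum = 0 := by
      have := sum_take_getLast htne
      rw [List.dropLast_eq_take]
      omega
    have htdl : t.dropLast = q.take (q.length - 2) := by
      rw [List.dropLast_eq_take, ht, List.take_take, htlen]
      congr 1
      omega
    have hlen2 : q.length = 2 := by
      by_contra hne2
      have h3 : 3 ≤ q.length := by omega
      have := hpos (q.length - 2) (by omega) (by omega)
      rw [← htdl] at this
      omega
    have ht1 : t.length = 1 := by omega
    obtain ⟨a, hta⟩ := List.length_eq_one_iff.mp ht1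
    have ha : a = 1 := by rw [hta] at hts; simpa using hts
    rw [hq, hta, ha, hd1]
    rfl
  · right
    exact ⟨hdap, ⟨d, List.getLast?_eq_getLast hne, by omega⟩, hpos⟩

lemma exists_dec {p : List ℤ} (h : IsDAP p) : DecA p ∨ DecB p ∨ DecC p ∨ DecD p := by
  obtain ⟨hne, hg, hs, hnn⟩ := h
  set T : Finset ℕ := (Finset.range p.length).filter (fun i => 0 < i ∧ (p.take i).sum = 0) with hT
  rcases T.eq_empty_or_nonempty with hTe | hTne
  · -- no interior return: p itself is UD or prime
    have hpos : ∀ i, 0 < i → i < p.length → 0 < (p.take i).sum := by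
      intro i h0 hlt
      rcases lt_or_eq_of_le (hnn i) with h | h
      · exact h
      · exfalso
        have : i ∈ T := by
          rw [hT]; simp [Finset.mem_filter, Finset.mem_range]; omega
        rw [hTe] at this; simp at this
    rcases prime_or_UD hne hg hs hpos with h | h
    · exact Or.inl h
    · exact Or.inr (Or.inr (Or.inl h))
  · set i := T.max' hTne with hi
    have hiT : i ∈ T := T.max'_mem hTne
    rw [hT, Finset.mem_filter, Finset.mem_range] at hiT
    obtain ⟨hilt, hipos, hisum⟩ := hiT
    have hmax : ∀ j, i < j → j < p.length → (p.take j).sum ≠ 0 := by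
      intro j hij hjlt hjs
      have : j ∈ T := by
        rw [hT]; simp [Finset.mem_filter, Finset.mem_range]; exact ⟨hjlt, by omega, hjs⟩
      have := T.le_max' j this
      omega
    set β := p.take i with hβ
    set γ := p.drop i with hγ
    have hβγ : p = β ++ γ := (List.take_append_drop i p).symm
    have hβlen : β.length = i := by simp [hβ]; omega
    have hβdap : IsDAP β := by
      refine ⟨?_, goodSteps_take hg i, hisum, fun j => ?_⟩
      · intro h; rw [h] at hβlen; simp at hβlen; omega
      · rw [hβ, List.take_take]
        exact hnn _
    have hγne : γ ≠ [] := by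
      intro h
      have : γ.length = 0 := by rw [h]; rfl
      rw [hγ, List.length_drop] at this
      omega
    have hγsum : γ.sum = 0 := by
      have := hs
      rw [hβγ, List.sum_append, hisum] at this
      simpa using this
    have htake : ∀ j, (γ.take j).sum = (p.take (i + j)).sum := by
      intro j
      rw [List.take_add, List.sum_append, ← hβ, hisum, ← hγ]
      ring
    have hγpos : ∀ j, 0 < j → j < γ.length → 0 < (γ.take j).sum := by
      intro j h0 hlt
      rw [htake]
      have hlt' : i + j < p.length := by
        rw [hγ, List.length_drop] at hlt; omega
      rcases lt_or_eq_of_le (hnn (i + j)) with h | h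
      · exact h
      · exact absurd h.symm (hmax (i + j) (by omega) hlt')
    rcases prime_or_UD hγne (goodSteps_drop hg i) hγsum hγpos with h | h
    · exact Or.inr (Or.inl ⟨β, hβdap, by rw [hβγ, h]⟩)
    · exact Or.inr (Or.inr (Or.inr ⟨β, γ, hβdap, h, hβγ⟩))

lemma prime_getLast {p : List ℤ} (h : IsPrimeDAP p) :
    ∃ d, p.getLast? = some d ∧ d ≤ -2 := h.2.1

lemma decB_len {p : List ℤ} (h : DecB p) : 4 ≤ p.length := by
  obtain ⟨β, hβ, rfl⟩ := h
  have := dap_two_le_length hβ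
  simp; omega

lemma decD_len {p : List ℤ} (h : DecD p) : 4 ≤ p.length := by
  obtain ⟨β, γ, hβ, hγ, rfl⟩ := h
  have h1 := dap_two_le_length hβ
  have h2 := dap_two_le_length hγ.1
  simp; omega

lemma decD_getLast {p : List ℤ} (h : DecD p) : ∃ d, p.getLast? = some d ∧ d ≤ -2 := by
  obtain ⟨β, γ, hβ, hγ, rfl⟩ := h
  obtain ⟨d, hd, hd2⟩ := hγ.2.1
  exact ⟨d, by rw [List.getLast?_append, hd]; rfl, hd2⟩

lemma decB_zero {p : List ℤ} (h : DecB p) :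
    ∃ j, 0 < j ∧ j < p.length ∧ (p.take j).sum = 0 := by
  obtain ⟨β, hβ, rfl⟩ := h
  have h2 := dap_two_le_length hβ
  refine ⟨β.length, by omega, by simp, ?_⟩
  rw [List.take_left, hβ.2.2.1]

lemma decD_zero {p : List ℤ} (h : DecD p) :
    ∃ j, 0 < j ∧ j < p.length ∧ (p.take j).sum = 0 := by
  obtain ⟨β, γ, hβ, hγ, rfl⟩ := h
  have h1 := dap_two_le_length hβ
  have h2 := dap_two_le_length hγ.1
  refine ⟨β.length, by omega, by simp; omega, ?_⟩
  rw [List.take_left, hβ.2.2.1]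

/-- every DAP admits exactly one of the four decompositions. -/
theorem stmt2 : ∀ p : List ℤ, IsDAP p →
    (DecA p ∨ DecB p ∨ DecC p ∨ DecD p) ∧
    ¬(DecA p ∧ DecB p) ∧ ¬(DecA p ∧ DecC p) ∧ ¬(DecA p ∧ DecD p) ∧
    ¬(DecB p ∧ DecC p) ∧ ¬(DecB p ∧ DecD p) ∧ ¬(DecC p ∧ DecD p) := by
  intro p hp
  refine ⟨exists_dec hp, ?_, ?_, ?_, ?_, ?_, ?_⟩
  · rintro ⟨hA, hB⟩
    have := decB_len hB
    rw [hA] at this; simp at this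
  · rintro ⟨hA, hC⟩
    obtain ⟨d, hd, hd2⟩ := hC.2.1
    rw [hA] at hd
    simp [List.getLast?] at hd
    omega
  · rintro ⟨hA, hD⟩
    have := decD_len hD
    rw [hA] at this; simp at this
  · rintro ⟨hB, hC⟩
    obtain ⟨j, hj0, hjl, hjs⟩ := decB_zero hB
    have := hC.2.2 j hj0 hjl
    omega
  · rintro ⟨hB, hD⟩
    obtain ⟨d, hd, hd2⟩ := decD_getLast hD
    obtain ⟨β, hβ, rfl⟩ := hB
    rw [List.getLast?_append] at hd
    simp [List.getLast?] at hd
    omega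
  · rintro ⟨hC, hD⟩
    obtain ⟨j, hj0, hjl, hjs⟩ := decD_zero hD
    have := hC.2.2 j hj0 hjl
    omega
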